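/- Let V_ℚ be a finite-dimensional ℚ-vector space, V_ℝ = ℝ ⊗_ℚ V_ℚ, V = ℂ ⊗_ℚ V_ℚ. Let X ⊆ V_ℚ*, A a countable index set, each Y_a a nonempty finite subset of V_ℚ*, and rational numbers B_x, C_{y,a}. Define Ω and Ω′ as the solution set of the equations ⟨x,λ⟩ = B_x and the subset where for each a some ⟨y,λ⟩ ∉ C_{y,a}ℤ. If Ω′ ≠ ∅ then Ω′ ∩ V_ℝ ≠ ∅; moreover for any z ∈ V_ℚ* not in the ℚ-span of X, there exists λ ∈ Ω′ ∩ V_ℝ with ⟨z, λ⟩ > 1. -/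

import Mathlib

open scoped TensorProduct

/-- The canonical pairing `⟨x, λ⟩` between a rational linear functional
`x ∈ V_ℚ*` and a point `λ` of `ℂ ⊗_ℚ V_ℚ`, extended `ℂ`-linearly. -/
noncomputable def pairC {V : Type*} [AddCommGroup V] [Module ℚ V]
    (x : Module.Dual ℚ V) (lam : ℂ ⊗[ℚ] V) : ℂ :=
  TensorProduct.lift
    { toFun := fun c : ℂ => c • ((LinearMap.toSpanSingleton ℚ ℂ (1 : ℂ)).comp x)
      map_add' := fun a b => by ext v; simp [add_smul]
      map_smul' := fun q c => by ext v; simp [smul_assoc] } lam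

/-- The canonical pairing over `ℝ`: `x ∈ V_ℚ*` against `λ ∈ ℝ ⊗_ℚ V_ℚ`. -/
noncomputable def pairR {V : Type*} [AddCommGroup V] [Module ℚ V]
    (x : Module.Dual ℚ V) (lam : ℝ ⊗[ℚ] V) : ℝ :=
  TensorProduct.lift
    { toFun := fun c : ℝ => c • ((LinearMap.toSpanSingleton ℚ ℝ (1 : ℝ)).comp x)
      map_add' := fun a b => by ext v; simp [add_smul]
      map_smul' := fun q c => by ext v; simp [smul_assoc] } lam

/-- The inclusion `V_ℝ = ℝ ⊗_ℚ V_ℚ → V = ℂ ⊗_ℚ V_ℚ`. -/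
noncomputable def realToComplex (V : Type*) [AddCommGroup V] [Module ℚ V] :
    ℝ ⊗[ℚ] V →ₗ[ℚ] ℂ ⊗[ℚ] V :=
  LinearMap.rTensor V ((Algebra.linearMap ℝ ℂ).restrictScalars ℚ)

section helpers
variable {V : Type*} [AddCommGroup V] [Module ℚ V]

lemma pairC_tmul (x : Module.Dual ℚ V) (c : ℂ) (v : V) :
    pairC x (c ⊗ₜ[ℚ] v) = c * ((x v : ℚ) : ℂ) := by
  simp [pairC, Algebra.smul_def, mul_comm]

lemma pairR_tmul (x : Module.Dual ℚ V) (c : ℝ) (v : V) :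
    pairR x (c ⊗ₜ[ℚ] v) = c * ((x v : ℚ) : ℝ) := by
  simp [pairR, Algebra.smul_def, mul_comm]

lemma pairC_add (x : Module.Dual ℚ V) (l1 l2 : ℂ ⊗[ℚ] V) :
    pairC x (l1 + l2) = pairC x l1 + pairC x l2 := by
  unfold pairC; exact map_add _ _ _

lemma pairR_add (x : Module.Dual ℚ V) (l1 l2 : ℝ ⊗[ℚ] V) :
    pairR x (l1 + l2) = pairR x l1 + pairR x l2 := by
  unfold pairR; exact map_add _ _ _

lemma pairR_sum (x : Module.Dual ℚ V) {ι : Type*} (s : Finset ι) (f : ι → ℝ ⊗[ℚ] V) :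
    pairR x (∑ i ∈ s, f i) = ∑ i ∈ s, pairR x (f i) := by
  unfold pairR; exact map_sum _ _ _

lemma pairC_realToComplex (x : Module.Dual ℚ V) (l : ℝ ⊗[ℚ] V) :
    pairC x (realToComplex V l) = ((pairR x l : ℝ) : ℂ) := by
  induction l using TensorProduct.induction_on with
  | zero => simp [realToComplex, pairC, pairR]
  | tmul r v => simp [realToComplex, pairC_tmul, pairR_tmul, LinearMap.rTensor_tmul]
  | add a b ha hb => rw [map_add, pairC_add, pairR_add, ha, hb]; push_cast; ring

lemma pairC_add_left (x y : Module.Dual ℚ V) (l : ℂ ⊗[ℚ] V) :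
    pairC (x + y) l = pairC x l + pairC y l := by
  induction l using TensorProduct.induction_on with
  | zero => simp [pairC]
  | tmul c v => simp [pairC_tmul]; ring
  | add a b ha hb => rw [pairC_add, pairC_add, pairC_add, ha, hb]; ring

lemma pairC_smul_left (q : ℚ) (x : Module.Dual ℚ V) (l : ℂ ⊗[ℚ] V) :
    pairC (q • x) l = (q : ℂ) * pairC x l := by
  induction l using TensorProduct.induction_on with
  | zero => simp [pairC]
  | tmul c v => simp [pairC_tmul]; ring
  | add a b ha hb => rw [pairC_add, pairC_add, ha, hb]; ring

lemma pairC_zero_left (l : ℂ ⊗[ℚ] V) : pairC (0 : Module.Dual ℚ V) l = 0 := by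
  have := pairC_smul_left 0 0 l; simpa using this

end helpers


lemma exists_not_mem_of_countable' {T : Set ℝ} (hT : T.Countable) : ∃ t : ℝ, t ∉ T := by
  by_contra h
  push_neg at h
  rw [Set.eq_univ_of_forall h] at hT
  exact Cardinal.not_countable_real hT

lemma exists_large_avoiding {T : Set ℝ} (hT : T.Countable) (c d : ℝ) (hc : c ≠ 0) :
    ∃ t : ℝ, 1 < d + t * c ∧ t ∉ T := by
  by_contra h
  push_neg at h
  set f : ℝ → ℝ := fun s => (Real.exp s + 1 - d) / c with hf
  have hfinj : Function.Injective f := by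
    intro s1 s2 hss
    simp only [hf] at hss
    rw [div_eq_div_iff hc hc] at hss
    have h2 := mul_right_cancel₀ hc hss
    have : Real.exp s1 = Real.exp s2 := by linarith
    exact Real.exp_injective this
  have hsub : Set.univ ⊆ f ⁻¹' T := by
    intro s _
    apply h
    simp only [hf, div_mul_cancel₀ _ hc]
    have := Real.exp_pos s
    linarith
  exact Cardinal.not_countable_real ((hT.preimage hfinj).mono hsub)

/-- Real points of sets cut out by rational linear equations
and countably many non-congruence conditions: with `A` countable, `Ω' ≠ ∅`
implies `Ω' ∩ V_ℝ ≠ ∅`; moreover, for any `z ∈ V_ℚ*` not in the `ℚ`-span of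
`X` there is `λ ∈ Ω' ∩ V_ℝ` with `⟨z, λ⟩ > 1`. -/
theorem statement7 {V : Type*} [AddCommGroup V] [Module ℚ V]
    [FiniteDimensional ℚ V]
    (X : Set (Module.Dual ℚ V)) (A : Type*) [Countable A]
    (Y : A → Finset (Module.Dual ℚ V)) (hY : ∀ a, (Y a).Nonempty)
    (Bq : Module.Dual ℚ V → ℚ) (C : A → Module.Dual ℚ V → ℚ)
    (Ω : Set (ℂ ⊗[ℚ] V)) (hΩ : Ω = {lam | ∀ x ∈ X, pairC x lam = (Bq x : ℂ)})
    (Ω' : Set (ℂ ⊗[ℚ] V))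
    (hΩ' : Ω' = {lam ∈ Ω | ∀ a : A, ∃ y ∈ Y a,
      ¬ ∃ n : ℤ, pairC y lam = (n : ℂ) * (C a y : ℂ)})
    (hne : Ω'.Nonempty) :
    (∃ lamR : ℝ ⊗[ℚ] V, realToComplex V lamR ∈ Ω') ∧
    (∀ z : Module.Dual ℚ V, z ∉ Submodule.span ℚ X →
      ∃ lamR : ℝ ⊗[ℚ] V, realToComplex V lamR ∈ Ω' ∧ 1 < pairR z lamR) := by
  classical
  set S : Submodule ℚ (Module.Dual ℚ V) := Submodule.span ℚ X with hS
  obtain ⟨lams, hws⟩ := hne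
  rw [hΩ'] at hws
  obtain ⟨hwΩ, hwA⟩ := hws
  rw [hΩ] at hwΩ
  -- the functional x ↦ pairC x lams
  set φ : Module.Dual ℚ V →ₗ[ℚ] ℂ :=
    { toFun := fun x => pairC x lams
      map_add' := fun x y => pairC_add_left x y lams
      map_smul' := fun q x => by
        have := pairC_smul_left q x lams
        simpa [Rat.smul_def] using this } with hφ
  -- rational values on S
  have hrat : ∀ x ∈ S, ∃ q : ℚ, pairC x lams = (q : ℂ) := by
    intro x hx
    induction hx using Submodule.span_induction with
    | mem x hxX => exact ⟨Bq x, hwΩ x hxX⟩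
    | zero => exact ⟨0, by simp [pairC_zero_left]⟩
    | add x y _ _ hx hy =>
        obtain ⟨q1, h1⟩ := hx; obtain ⟨q2, h2⟩ := hy
        exact ⟨q1 + q2, by rw [pairC_add_left, h1, h2]; push_cast; ring⟩
    | smul q x _ hx =>
        obtain ⟨q1, h1⟩ := hx
        exact ⟨q * q1, by rw [pairC_smul_left, h1]; push_cast; ring⟩
  -- a rational point λ₀
  obtain ⟨g, hg⟩ := (Algebra.linearMap ℚ ℂ).exists_leftInverse_of_injective
    (by rw [LinearMap.ker_eq_bot]; intro a b h; simpa using h)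
  obtain ⟨Ψ, hΨ⟩ := LinearMap.exists_extend (g ∘ₗ (φ ∘ₗ S.subtype))
  set lam0 : V := (Module.evalEquiv ℚ V).symm Ψ with hlam0
  have hl0 : ∀ x : Module.Dual ℚ V, x lam0 = Ψ x := fun x =>
    Module.apply_evalEquiv_symm_apply ℚ V x Ψ
  have hl0S : ∀ x ∈ S, ((x lam0 : ℚ) : ℂ) = pairC x lams := by
    intro x hx
    obtain ⟨q, hq⟩ := hrat x hx
    have h1 : x lam0 = g (pairC x lams) := by
      have := LinearMap.congr_fun hΨ ⟨x, hx⟩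
      simpa [hl0 x, hφ] using this
    have h2 : g (pairC x lams) = q := by
      rw [hq]
      have := LinearMap.congr_fun hg q
      simpa using this
    rw [h1, h2, hq]
  clear_value lam0
  have hl0X : ∀ x ∈ X, x lam0 = Bq x := by
    intro x hx
    have := hl0S x (Submodule.subset_span hx)
    rw [hwΩ x hx] at this
    exact_mod_cast this
  -- on Ω, the pairing against y ∈ S is constant = y lam0
  have hconst : ∀ lam, (∀ x ∈ X, pairC x lam = (Bq x : ℂ)) →
      ∀ y ∈ S, pairC y lam = ((y lam0 : ℚ) : ℂ) := by
    intro lam hlam y hy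
    induction hy using Submodule.span_induction with
    | mem x hxX => rw [hlam x hxX, hl0X x hxX]
    | zero => simp [pairC_zero_left]
    | add x y _ _ hx hy =>
        rw [pairC_add_left, hx, hy]; push_cast [LinearMap.add_apply]; ring
    | smul q x _ hx =>
        rw [pairC_smul_left, hx]; push_cast [LinearMap.smul_apply, Rat.smul_def]; ring
  set W : Submodule ℚ V := S.dualCoannihilator with hW
  have hsep : ∀ y : Module.Dual ℚ V, y ∉ S → ∃ w ∈ W, y w ≠ 0 := by
    intro y hy
    by_contra h
    push_neg at h
    apply hy
    have : y ∈ W.dualAnnihilator := by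
      rw [Submodule.mem_dualAnnihilator]; exact h
    rwa [hW, Subspace.dualCoannihilator_dualAnnihilator_eq] at this
  -- basis of W
  set k : ℕ := Module.finrank ℚ W with hk
  set e : Module.Basis (Fin k) ℚ W := Module.finBasis ℚ W with he
  -- the polynomials
  set P : Module.Dual ℚ V → Polynomial ℝ := fun x =>
    ∑ j : Fin k, Polynomial.C ((x (e j) : ℚ) : ℝ) * Polynomial.X ^ (j : ℕ) with hP
  have heval : ∀ (x : Module.Dual ℚ V) (u : ℝ),
      (P x).eval u = ∑ j : Fin k, ((x (e j) : ℚ) : ℝ) * u ^ (j : ℕ) := by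
    intro x u
    rw [hP]; simp [Polynomial.eval_finset_sum]
  have hPne : ∀ x : Module.Dual ℚ V, x ∉ S → P x ≠ 0 := by
    intro x hx
    obtain ⟨w, hwW, hxw⟩ := hsep x hx
    have hj : ∃ j : Fin k, x (e j) ≠ 0 := by
      by_contra h
      push_neg at h
      apply hxw
      have hrepr := Module.Basis.sum_repr e ⟨w, hwW⟩
      have : (w : V) = ∑ j : Fin k, e.repr ⟨w, hwW⟩ j • ((e j : W) : V) := by
        conv_lhs => rw [show w = ((⟨w, hwW⟩ : W) : V) from rfl, ← hrepr]
        push_cast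
        rfl
      rw [this, map_sum]
      simp [h]
    obtain ⟨j, hj⟩ := hj
    intro hzero
    have : (P x).coeff (j : ℕ) = ((x (e j) : ℚ) : ℝ) := by
      rw [hP]
      rw [Polynomial.finset_sum_coeff]
      rw [Finset.sum_eq_single j]
      · simp [Polynomial.coeff_C_mul_X_pow]
      · intro b _ hb
        rw [Polynomial.coeff_C_mul_X_pow]
        simp only [ite_eq_right_iff]
        intro hbj
        exact absurd (Fin.val_injective hbj.symm) hb
      · simp
    rw [hzero] at this
    simp only [Polynomial.coeff_zero] at this
    exact hj (by exact_mod_cast this.symm)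
  -- index of non-congruence conditions
  set I := (a : A) × {y : Module.Dual ℚ V // y ∈ Y a} with hI
  haveI : Countable I := by
    infer_instance
  set yI : I → Module.Dual ℚ V := fun i => i.2.1 with hyI
  set CI : I → ℚ := fun i => C i.1 i.2.1 with hCI
  set badI : I → Prop := fun i => yI i ∉ S with hbadI
  -- bad u's
  set Ubad : Set ℝ := ⋃ i : I, {r : ℝ | badI i ∧ (P (yI i)).eval r = 0} with hUbad
  have hUbadc : Ubad.Countable := by
    apply Set.countable_iUnion
    intro i
    by_cases hb : badI i
    · exact ((Polynomial.finite_setOf_isRoot (hPne _ hb)).subset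
        (fun r hr => hr.2)).countable
    · have : {r : ℝ | badI i ∧ (P (yI i)).eval r = 0} = ∅ := by
        ext r; simp [hb]
      rw [this]; exact Set.countable_empty
  -- bad t's given u
  set T : ℝ → Set ℝ := fun u => ⋃ i : I, ⋃ n : ℤ,
    {t : ℝ | badI i ∧ ((yI i) lam0 : ℝ) + t * (P (yI i)).eval u = (n : ℝ) * (CI i : ℝ)}
    with hT
  have hTc : ∀ u, u ∉ Ubad → (T u).Countable := by
    intro u hu
    apply Set.countable_iUnion
    intro i
    apply Set.countable_iUnion
    intro n
    apply Set.Subsingleton.countable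
    intro t1 h1 t2 h2
    have hb : badI i := h1.1
    have hc : (P (yI i)).eval u ≠ 0 := by
      intro h0
      exact hu (Set.mem_iUnion.2 ⟨i, ⟨hb, h0⟩⟩)
    have := h1.2.trans h2.2.symm
    have h3 : t1 * (P (yI i)).eval u = t2 * (P (yI i)).eval u := by linarith
    exact mul_right_cancel₀ hc h3
  -- the candidate real points
  set lamR : ℝ → ℝ → ℝ ⊗[ℚ] V := fun u t =>
    (1 : ℝ) ⊗ₜ[ℚ] lam0 + ∑ j : Fin k, (t * u ^ (j : ℕ)) ⊗ₜ[ℚ] ((e j : W) : V) with hlamR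
  have hpair : ∀ (x : Module.Dual ℚ V) (u t : ℝ),
      pairR x (lamR u t) = ((x lam0 : ℚ) : ℝ) + t * (P x).eval u := by
    intro x u t
    rw [hlamR]
    simp only []
    rw [pairR_add, pairR_sum, pairR_tmul, heval, Finset.mul_sum]
    rw [one_mul]
    congr 1
    apply Finset.sum_congr rfl
    intro j _
    rw [pairR_tmul]
    ring
  -- membership of the candidate points
  have core : ∀ u, u ∉ Ubad → ∀ t, t ∉ T u → realToComplex V (lamR u t) ∈ Ω' := by
    intro u hu t ht
    have hmem : ∀ x ∈ X, pairC x (realToComplex V (lamR u t)) = (Bq x : ℂ) := by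
      intro x hx
      rw [pairC_realToComplex, hpair]
      have hev : (P x).eval u = 0 := by
        rw [heval]
        apply Finset.sum_eq_zero
        intro j _
        have hz0 : x ((e j : W) : V) = 0 :=
          (Submodule.mem_dualCoannihilator _).mp (SetLike.coe_mem (e j)) x (Submodule.subset_span hx)
        rw [hz0]; simp
      rw [hev, hl0X x hx]
      push_cast
      ring
    rw [hΩ']
    refine ⟨by rw [hΩ]; exact hmem, ?_⟩
    intro a
    obtain ⟨y, hyY, hyn⟩ := hwA a
    by_cases hyS : y ∈ S
    · refine ⟨y, hyY, ?_⟩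
      rw [hconst _ hmem y hyS]
      rw [hconst _ hwΩ y hyS] at hyn
      exact hyn
    · refine ⟨y, hyY, ?_⟩
      rintro ⟨n, hn⟩
      rw [pairC_realToComplex, hpair] at hn
      have hreal : ((y lam0 : ℚ) : ℝ) + t * (P y).eval u = (n : ℝ) * ((C a y : ℚ) : ℝ) := by
        exact_mod_cast hn
      exact ht (Set.mem_iUnion.2 ⟨⟨a, ⟨y, hyY⟩⟩, Set.mem_iUnion.2 ⟨n, ⟨hyS, hreal⟩⟩⟩)
  constructor
  · -- part 1
    obtain ⟨u, hu⟩ := exists_not_mem_of_countable' hUbadc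
    obtain ⟨t, ht⟩ := exists_not_mem_of_countable' (hTc u hu)
    exact ⟨lamR u t, core u hu t ht⟩
  · -- part 2
    intro z hz
    have hPz : P z ≠ 0 := hPne z hz
    obtain ⟨u, hu⟩ := exists_not_mem_of_countable'
      (hUbadc.union (Polynomial.finite_setOf_isRoot hPz).countable)
    have hu1 : u ∉ Ubad := fun h => hu (Or.inl h)
    have hcz : (P z).eval u ≠ 0 := fun h => hu (Or.inr h)
    obtain ⟨t, ht1, ht2⟩ := exists_large_avoiding (hTc u hu1)
      ((P z).eval u) ((z lam0 : ℚ) : ℝ) hcz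
    refine ⟨lamR u t, core u hu1 t ht2, ?_⟩
    rw [hpair]
    exact ht1
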